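/- There is an absolute constant C with the following property. Suppose A_= is equipped with an (m, β) row paving satisfying βm ≤ C‖A_=‖²log(1+n), where ‖A_=‖ denotes the spectral norm. Then the iterates of Algorithm 1 satisfy, for every j ≥ 1, E[d(x_j, S)²] ≤ γ^j · d(x_0, S)², where γ = 1 − 1/(L²(n_i + C‖A_=‖²log(1+n))). -/

import Mathlib

open scoped RealInnerProductSpace BigOperators

noncomputable section

/-- An `(m, β)` row paving of the rows of `a` indexed by `I`: a partition of `I` into `m`
nonempty blocks `T 0, …, T (m-1)` such that for each block `τ`, the row submatrix `A_τ` with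
rows `(a i)_{i ∈ τ}` satisfies `λ_max(A_τ A_τ*) ≤ β`, stated equivalently as the quadratic
bound `‖A_τ x‖² = ∑_{i ∈ τ} ⟪a i, x⟫² ≤ β ‖x‖²` for all `x`. -/
def IsRowPaving {n d : ℕ} (a : Fin n → EuclideanSpace ℝ (Fin d)) (I : Finset (Fin n))
    (m : ℕ) (β : ℝ) (T : Fin m → Finset (Fin n)) : Prop :=
  (∀ k, (T k).Nonempty) ∧
  (∀ k l, k ≠ l → Disjoint (T k) (T l)) ∧
  (Finset.univ.biUnion T = I) ∧
  (∀ k, ∀ x : EuclideanSpace ℝ (Fin d), ∑ i ∈ T k, ⟪a i, x⟫ ^ 2 ≤ β * ‖x‖ ^ 2)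

/-- The random iterates of a Kaczmarz-type algorithm: given the outcomes `ω : Fin j → C` of
`j` independent random choices and an update map `step`, `kacIter step x0 j ω` is the `j`-th
iterate started from `x0`. -/
def kacIter {C V : Type*} (step : C → V → V) (x0 : V) : (j : ℕ) → (Fin j → C) → V
  | 0, _ => x0
  | j + 1, ω => step (ω (Fin.last j)) (kacIter step x0 j fun k => ω k.castSucc)

lemma helper_inner_zero {E : Type*} [NormedAddCommGroup E] [InnerProductSpace ℝ E] {u v y : E}
    (h : ∀ t : ℝ, ‖u - v‖ ≤ ‖u - (v + t • (y - v))‖) : ⟪u - v, y - v⟫ = 0 := by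
  by_cases hy : y - v = 0
  · rw [hy, inner_zero_right]
  · set q : ℝ := ‖y - v‖ ^ 2 with hqdef
    have hyv : 0 < ‖y - v‖ := norm_pos_iff.mpr hy
    have hq : 0 < q := by positivity
    set c : ℝ := ⟪u - v, y - v⟫ with hc
    have key : ∀ t : ℝ, 0 ≤ t ^ 2 * q - 2 * t * c := by
      intro t
      have h1 := h t
      have h2 : ‖u - v‖ ^ 2 ≤ ‖u - (v + t • (y - v))‖ ^ 2 := by
        nlinarith [norm_nonneg (u - v), norm_nonneg (u - (v + t • (y - v)))]
      have e1 : u - (v + t • (y - v)) = (u - v) - t • (y - v) := by abel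
      have e3 : ‖(u - v) - t • (y - v)‖ ^ 2
          = ‖u - v‖ ^ 2 - 2 * ⟪u - v, t • (y - v)⟫ + ‖t • (y - v)‖ ^ 2 :=
        norm_sub_sq_real (u - v) (t • (y - v))
      have e4 : ⟪u - v, t • (y - v)⟫ = t * c := real_inner_smul_right _ _ _
      have e5 : ‖t • (y - v)‖ ^ 2 = t ^ 2 * q := by
        rw [norm_smul, hqdef, mul_pow, Real.norm_eq_abs, sq_abs]
      rw [e1, e3, e4, e5] at h2
      linarith
    have h3 := key (c / q)
    have ht0 : c / q * q = c := div_mul_cancel₀ c hq.ne'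
    have h4 : c ^ 2 ≤ 0 := by nlinarith [h3, hq, ht0, sq_nonneg (c / q)]
    exact sq_eq_zero_iff.mp (le_antisymm h4 (sq_nonneg c))

lemma helper_pyth {E : Type*} [NormedAddCommGroup E] [InnerProductSpace ℝ E] {u v y : E}
    (h : ⟪u - v, y - v⟫ = 0) : ‖v - y‖ ^ 2 = ‖u - y‖ ^ 2 - ‖u - v‖ ^ 2 := by
  have e1 : u - y = (u - v) + (v - y) := by abel
  have e2 : ⟪u - v, v - y⟫ = 0 := by
    have e : v - y = -(y - v) := by abel
    rw [e, inner_neg_right, h, neg_zero]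
  rw [e1, norm_add_sq_real, e2]
  ring

lemma card_filter_ge (ne ni : ℕ) :
    (Finset.univ.filter fun i : Fin (ne + ni) => ne ≤ (i : ℕ)).card = ni := by
  have himg : (Finset.univ.filter fun i : Fin (ne + ni) => ne ≤ (i : ℕ))
      = Finset.image (fun j : Fin ni => (⟨ne + (j : ℕ), by omega⟩ : Fin (ne + ni)))
          Finset.univ := by
    ext i
    simp only [Finset.mem_filter, Finset.mem_univ, true_and, Finset.mem_image]
    constructor
    · intro h
      exact ⟨⟨(i : ℕ) - ne, by omega⟩, by apply Fin.ext; simp; omega⟩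
    · rintro ⟨j, rfl⟩
      simp
  rw [himg, Finset.card_image_of_injective _ (fun j1 j2 h => by
    apply Fin.ext
    simpa using Fin.val_eq_of_eq h)]
  simp

set_option maxHeartbeats 1000000 in
/-- **Corollary.** There is an absolute constant `C > 0` such that: for every standardized
system of equalities and inequalities with nonempty feasible set `S`, Hoffman constant `L`,
and an `(m, β)` row paving of `A_=` satisfying `βm ≤ C ‖A_=‖² log(1+n)` (where `‖A_=‖` is the
spectral norm of the equality submatrix, characterized here by `NAsq = ‖A_=‖²` being the least
`t ≥ 0` with `∑_{i ∈ I_=} ⟪a i, x⟫² ≤ t ‖x‖²` for all `x`), the iterates of Algorithm 1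
satisfy `𝔼[d(x_j, S)²] ≤ γ^j ⬝ d(x_0, S)²` with
`γ = 1 − 1/(L²(n_i + C ‖A_=‖² log(1+n)))`. -/
theorem block_kaczmarz_with_inequalities_convergence_paving :
    ∃ C : ℝ, 0 < C ∧
    ∀ (ne ni d m : ℕ), 0 < ni → 0 < m →
    ∀ (a : Fin (ne + ni) → EuclideanSpace ℝ (Fin d)) (b : Fin (ne + ni) → ℝ),
    (∀ i, ‖a i‖ = 1) →
    ∀ S : Set (EuclideanSpace ℝ (Fin d)),
    S = {x | (∀ i : Fin (ne + ni), (i : ℕ) < ne → ⟪a i, x⟫ = b i) ∧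
             (∀ i : Fin (ne + ni), ne ≤ (i : ℕ) → ⟪a i, x⟫ ≤ b i)} →
    S.Nonempty →
    ∀ β : ℝ, 0 < β →
    ∀ T : Fin m → Finset (Fin (ne + ni)),
    IsRowPaving a (Finset.univ.filter fun i : Fin (ne + ni) => (i : ℕ) < ne) m β T →
    -- `NAsq` is the squared spectral norm `‖A_=‖²` of the equality submatrix
    ∀ NAsq : ℝ,
    IsLeast {t : ℝ | 0 ≤ t ∧ ∀ x : EuclideanSpace ℝ (Fin d),
      ∑ i ∈ (Finset.univ.filter fun i : Fin (ne + ni) => (i : ℕ) < ne), ⟪a i, x⟫ ^ 2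
        ≤ t * ‖x‖ ^ 2} NAsq →
    -- the paving satisfies `βm ≤ C ‖A_=‖² log(1+n)` as provided by Proposition 1.6
    β * m ≤ C * NAsq * Real.log (1 + (ne + ni)) →
    ∀ L : ℝ, 0 < L →
    (∀ x : EuclideanSpace ℝ (Fin d), Metric.infDist x S ≤
      L * Real.sqrt (∑ i : Fin (ne + ni), (if (i : ℕ) < ne then ⟪a i, x⟫ - b i
                           else max (⟪a i, x⟫ - b i) 0) ^ 2)) →
    ∀ step : (Fin m ⊕ {i : Fin (ne + ni) // ne ≤ (i : ℕ)}) →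
      EuclideanSpace ℝ (Fin d) → EuclideanSpace ℝ (Fin d),
    (∀ (k : Fin m) (x : EuclideanSpace ℝ (Fin d)),
      (∀ i ∈ T k, ⟪a i, step (Sum.inl k) x⟫ = b i) ∧
      (∀ y : EuclideanSpace ℝ (Fin d), (∀ i ∈ T k, ⟪a i, y⟫ = b i) →
        ‖x - step (Sum.inl k) x‖ ≤ ‖x - y‖)) →
    (∀ (i : {i : Fin (ne + ni) // ne ≤ (i : ℕ)}) (x : EuclideanSpace ℝ (Fin d)),
      step (Sum.inr i) x = x - max (⟪a i.1, x⟫ - b i.1) 0 • a i.1) →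
    ∀ w : (Fin m ⊕ {i : Fin (ne + ni) // ne ≤ (i : ℕ)}) → ℝ,
    (∀ k : Fin m, w (Sum.inl k) = (β * m / (ni + β * m)) / m) →
    (∀ i : {i : Fin (ne + ni) // ne ≤ (i : ℕ)},
      w (Sum.inr i) = (1 - β * m / (ni + β * m)) / ni) →
    ∀ x0 : EuclideanSpace ℝ (Fin d), ∀ j : ℕ, 1 ≤ j →
    ∑ ω : Fin j → (Fin m ⊕ {i : Fin (ne + ni) // ne ≤ (i : ℕ)}),
        (∏ k, w (ω k)) * Metric.infDist (kacIter step x0 j ω) S ^ 2 ≤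
      (1 - 1 / (L ^ 2 * (ni + C * NAsq * Real.log (1 + (ne + ni))))) ^ j *
        Metric.infDist x0 S ^ 2 := by
  refine ⟨1, one_pos, ?_⟩
  intro ne ni d m hni hm a b ha S hS hSne β hβ T hT NAsq hNA hpav L hL hHoff
    step hproj hrow w hwl hwr x0 j hj
  obtain ⟨hTne, hTdisj, hTunion, hTβ⟩ := hT
  have hmR : (0:ℝ) < m := by exact_mod_cast hm
  have hniR : (0:ℝ) < ni := by exact_mod_cast hni
  -- ne ≥ 1
  have hne : 0 < ne := by
    obtain ⟨i1, hi1⟩ := hTne ⟨0, hm⟩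
    have h2 : i1 ∈ Finset.univ.biUnion T :=
      Finset.mem_biUnion.mpr ⟨⟨0, hm⟩, Finset.mem_univ _, hi1⟩
    rw [hTunion, Finset.mem_filter] at h2
    omega
  have hNA0 : 0 ≤ NAsq := hNA.1.1
  have hNAle := hNA.1.2
  -- log ≥ 1
  have hlog : 1 ≤ Real.log (1 + ((ne : ℝ) + (ni : ℝ))) := by
    rw [Real.le_log_iff_exp_le (by positivity)]
    have h2 : (1 : ℝ) ≤ (ne : ℝ) := by exact_mod_cast hne
    have h3 : (1 : ℝ) ≤ (ni : ℝ) := by exact_mod_cast hni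
    nlinarith [Real.exp_one_lt_d9]
  -- S is closed
  have hclosed : IsClosed S := by
    rw [hS]
    have hrep : {x : EuclideanSpace ℝ (Fin d) |
        (∀ i : Fin (ne + ni), (i : ℕ) < ne → ⟪a i, x⟫ = b i) ∧
        (∀ i : Fin (ne + ni), ne ≤ (i : ℕ) → ⟪a i, x⟫ ≤ b i)}
        = (⋂ i : Fin (ne + ni), {x | (i : ℕ) < ne → ⟪a i, x⟫ = b i}) ∩
          (⋂ i : Fin (ne + ni), {x | ne ≤ (i : ℕ) → ⟪a i, x⟫ ≤ b i}) := by
      ext x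
      simp [Set.mem_iInter, Set.mem_setOf_eq]
    rw [hrep]
    have hcont : ∀ i : Fin (ne + ni),
        Continuous fun x : EuclideanSpace ℝ (Fin d) => ⟪a i, x⟫ :=
      fun i => continuous_const.inner continuous_id
    refine IsClosed.inter (isClosed_iInter fun i => ?_) (isClosed_iInter fun i => ?_)
    · by_cases hi : (i : ℕ) < ne
      · simp only [hi, forall_true_left]
        exact isClosed_eq (hcont i) continuous_const
      · simp only [hi, false_implies]
        exact isClosed_univ
    · by_cases hi : ne ≤ (i : ℕ)
      · simp only [hi, forall_true_left]
        exact isClosed_le (hcont i) continuous_const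
      · simp only [hi, false_implies]
        exact isClosed_univ
  -- NAsq ≥ 1
  let i0 : Fin (ne + ni) := ⟨0, by omega⟩
  have hi0lt : (i0 : ℕ) < ne := hne
  have hi0mem : i0 ∈ Finset.univ.filter fun i : Fin (ne + ni) => (i : ℕ) < ne :=
    Finset.mem_filter.mpr ⟨Finset.mem_univ _, hi0lt⟩
  have hself : ⟪a i0, a i0⟫ = 1 := by
    rw [real_inner_self_eq_norm_sq, ha i0, one_pow]
  have hNA1 : 1 ≤ NAsq := by
    have h1 := Finset.single_le_sum
      (f := fun i => ⟪a i, a i0⟫ ^ 2) (fun i _ => sq_nonneg _) hi0mem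
    simp only [hself] at h1
    have h2 := hNAle (a i0)
    rw [ha i0] at h2
    norm_num at h1 h2
    linarith
  -- Hoffman constant forces 1 ≤ L² (NAsq + ni)
  have hLsq : 1 ≤ L ^ 2 * (NAsq + (ni : ℝ)) := by
    obtain ⟨y0, hy0⟩ := id hSne
    have hy0' : (∀ i : Fin (ne + ni), (i : ℕ) < ne → ⟪a i, y0⟫ = b i) ∧
        (∀ i : Fin (ne + ni), ne ≤ (i : ℕ) → ⟪a i, y0⟫ ≤ b i) := by
      rw [hS] at hy0; exact hy0
    obtain ⟨hy0eq, hy0le⟩ := hy0'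
    set x1 := y0 + a i0 with hx1
    have hdist1 : (1 : ℝ) ≤ Metric.infDist x1 S := by
      by_contra hcon
      push_neg at hcon
      obtain ⟨z, hzS, hz⟩ := (Metric.infDist_lt_iff hSne).mp hcon
      have hz' : (∀ i : Fin (ne + ni), (i : ℕ) < ne → ⟪a i, z⟫ = b i) ∧
          (∀ i : Fin (ne + ni), ne ≤ (i : ℕ) → ⟪a i, z⟫ ≤ b i) := by
        rw [hS] at hzS; exact hzS
      have hCS : ⟪a i0, x1 - z⟫ ≤ ‖a i0‖ * ‖x1 - z‖ := real_inner_le_norm _ _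
      rw [ha i0, one_mul] at hCS
      have hiz : ⟪a i0, x1 - z⟫ = 1 := by
        rw [inner_sub_right, hx1, inner_add_right, hy0eq i0 hi0lt, hz'.1 i0 hi0lt, hself]
        ring
      rw [dist_eq_norm] at hz
      linarith
    set R1 := ∑ i : Fin (ne + ni), (if (i : ℕ) < ne then ⟪a i, x1⟫ - b i
        else max (⟪a i, x1⟫ - b i) 0) ^ 2 with hR1def
    have hfc : (Finset.univ.filter fun i : Fin (ne + ni) => ¬ (i : ℕ) < ne)
        = Finset.univ.filter fun i : Fin (ne + ni) => ne ≤ (i : ℕ) :=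
      Finset.filter_congr fun i _ => by rw [not_lt]
    have hsplit : R1 = (∑ i ∈ Finset.univ.filter (fun i : Fin (ne + ni) => (i : ℕ) < ne),
          (⟪a i, x1⟫ - b i) ^ 2)
        + ∑ i ∈ Finset.univ.filter (fun i : Fin (ne + ni) => ne ≤ (i : ℕ)),
          max (⟪a i, x1⟫ - b i) 0 ^ 2 := by
      rw [hR1def, ← Finset.sum_filter_add_sum_filter_not Finset.univ
        (fun i : Fin (ne + ni) => (i : ℕ) < ne), hfc]
      congr 1
      · refine Finset.sum_congr rfl fun i hi => ?_
        rw [Finset.mem_filter] at hi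
        rw [if_pos hi.2]
      · refine Finset.sum_congr rfl fun i hi => ?_
        rw [Finset.mem_filter] at hi
        rw [if_neg (by omega)]
    have hA : (∑ i ∈ Finset.univ.filter (fun i : Fin (ne + ni) => (i : ℕ) < ne),
        (⟪a i, x1⟫ - b i) ^ 2) ≤ NAsq := by
      have he : ∀ i ∈ Finset.univ.filter (fun i : Fin (ne + ni) => (i : ℕ) < ne),
          (⟪a i, x1⟫ - b i) ^ 2 = ⟪a i, a i0⟫ ^ 2 := by
        intro i hi
        rw [Finset.mem_filter] at hi
        rw [hx1, inner_add_right, hy0eq i hi.2]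
        ring_nf
      rw [Finset.sum_congr rfl he]
      have h2 := hNAle (a i0)
      rw [ha i0] at h2
      norm_num at h2
      exact h2
    have hB : (∑ i ∈ Finset.univ.filter (fun i : Fin (ne + ni) => ne ≤ (i : ℕ)),
        max (⟪a i, x1⟫ - b i) 0 ^ 2) ≤ (ni : ℝ) := by
      have hb1 : ∀ i ∈ Finset.univ.filter (fun i : Fin (ne + ni) => ne ≤ (i : ℕ)),
          max (⟪a i, x1⟫ - b i) 0 ^ 2 ≤ 1 := by
        intro i hi
        rw [Finset.mem_filter] at hi
        have hle : ⟪a i, x1⟫ - b i ≤ ⟪a i, a i0⟫ := by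
          rw [hx1, inner_add_right]
          have := hy0le i hi.2
          linarith
        have habs : |⟪a i, a i0⟫| ≤ 1 := by
          have := abs_real_inner_le_norm (a i) (a i0)
          rw [ha i, ha i0] at this
          linarith
        rcases le_or_gt (⟪a i, x1⟫ - b i) 0 with h0 | h0
        · rw [max_eq_right h0]
          norm_num
        · rw [max_eq_left h0.le]
          have h1 : ⟪a i, x1⟫ - b i ≤ 1 := le_trans hle (le_trans (le_abs_self _) habs)
          nlinarith
      calc (∑ i ∈ Finset.univ.filter (fun i : Fin (ne + ni) => ne ≤ (i : ℕ)),
          max (⟪a i, x1⟫ - b i) 0 ^ 2)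
          ≤ ∑ _i ∈ Finset.univ.filter (fun i : Fin (ne + ni) => ne ≤ (i : ℕ)), (1:ℝ) :=
            Finset.sum_le_sum hb1
        _ = (ni : ℝ) := by rw [Finset.sum_const, card_filter_ge]; simp
    have hR1le : R1 ≤ NAsq + (ni : ℝ) := by rw [hsplit]; linarith
    have hR10 : 0 ≤ R1 := Finset.sum_nonneg fun i _ => sq_nonneg _
    have hH := hHoff x1
    rw [← hR1def] at hH
    have h1 : 1 ≤ L ^ 2 * R1 := by
      nlinarith [Real.sq_sqrt hR10, Real.sqrt_nonneg R1]
    nlinarith [sq_nonneg L]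
  -- the denominators
  set D : ℝ := (ni : ℝ) + β * m with hD
  have hDpos : 0 < D := by positivity
  set D' : ℝ := (ni : ℝ) + 1 * NAsq * Real.log (1 + ((ne : ℝ) + (ni : ℝ))) with hD'
  have hlog0 : 0 ≤ Real.log (1 + ((ne : ℝ) + (ni : ℝ))) := le_trans zero_le_one hlog
  have hD'pos : 0 < D' := by rw [hD']; positivity
  have hDD' : D ≤ D' := by
    rw [hD, hD']
    linarith [hpav]
  have hLD'1 : 1 ≤ L ^ 2 * D' := by
    have h0 : NAsq * 1 ≤ NAsq * Real.log (1 + ((ne : ℝ) + (ni : ℝ))) :=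
      mul_le_mul_of_nonneg_left hlog hNA0
    have h1 : NAsq + (ni : ℝ) ≤ D' := by rw [hD']; linarith
    have h2 := mul_le_mul_of_nonneg_left h1 (sq_nonneg L)
    linarith
  have hLD'pos : 0 < L ^ 2 * D' := by positivity
  have hγ0 : 0 ≤ 1 - 1 / (L ^ 2 * D') := by
    have : 1 / (L ^ 2 * D') ≤ 1 := by rw [div_le_one hLD'pos]; exact hLD'1
    linarith
  -- weights
  have hwl' : ∀ k, w (Sum.inl k) = β / D := by
    intro k
    rw [hwl k]
    field_simp
  have hwr' : ∀ i, w (Sum.inr i) = 1 / D := by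
    intro i
    rw [hwr i, hD]
    field_simp
    ring
  have hw0 : ∀ c, 0 ≤ w c := by
    rintro (k | i)
    · rw [hwl' k]; positivity
    · rw [hwr' i]; positivity
  -- one-step bound
  have key : ∀ x : EuclideanSpace ℝ (Fin d),
      (∑ c : Fin m ⊕ {i : Fin (ne + ni) // ne ≤ (i : ℕ)},
        w c * Metric.infDist (step c x) S ^ 2)
      ≤ (1 - 1 / (L ^ 2 * D')) * Metric.infDist x S ^ 2 := by
    intro x
    obtain ⟨y, hyS, hxy⟩ := hclosed.exists_infDist_eq_dist hSne x
    have hy' : (∀ i : Fin (ne + ni), (i : ℕ) < ne → ⟪a i, y⟫ = b i) ∧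
        (∀ i : Fin (ne + ni), ne ≤ (i : ℕ) → ⟪a i, y⟫ ≤ b i) := by
      rw [hS] at hyS; exact hyS
    obtain ⟨hyeq, hyle⟩ := hy'
    have hdist : Metric.infDist x S = ‖x - y‖ := by rw [hxy, dist_eq_norm]
    set Q := ‖x - y‖ ^ 2 with hQ
    have hQ0 : 0 ≤ Q := sq_nonneg _
    -- block step bound
    have hblock : ∀ k : Fin m, ‖step (Sum.inl k) x - y‖ ^ 2
        ≤ Q - (∑ i ∈ T k, (⟪a i, x⟫ - b i) ^ 2) / β := by
      intro k
      set v := step (Sum.inl k) x with hv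
      have hvK := (hproj k x).1
      have hmin := (hproj k x).2
      have hyK : ∀ i ∈ T k, ⟪a i, y⟫ = b i := by
        intro i hi
        refine hyeq i ?_
        have h2 : i ∈ Finset.univ.biUnion T :=
          Finset.mem_biUnion.mpr ⟨k, Finset.mem_univ _, hi⟩
        rw [hTunion, Finset.mem_filter] at h2
        exact h2.2
      have hinner : ⟪x - v, y - v⟫ = 0 := by
        apply helper_inner_zero
        intro t
        apply hmin
        intro i hi
        rw [inner_add_right, real_inner_smul_right, inner_sub_right, hvK i hi, hyK i hi]
        ring
      have hpyth := helper_pyth hinner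
      have hs : (∑ i ∈ T k, (⟪a i, x⟫ - b i) ^ 2) ≤ β * ‖x - v‖ ^ 2 := by
        have h2 := hTβ k (x - v)
        refine le_trans (le_of_eq ?_) h2
        refine Finset.sum_congr rfl fun i hi => ?_
        rw [inner_sub_right, hvK i hi]
      have hdiv : (∑ i ∈ T k, (⟪a i, x⟫ - b i) ^ 2) / β ≤ ‖x - v‖ ^ 2 :=
        (div_le_iff₀ hβ).mpr (by linarith)
      linarith
    -- row step bound
    have hrowb : ∀ i : {i : Fin (ne + ni) // ne ≤ (i : ℕ)},
        ‖step (Sum.inr i) x - y‖ ^ 2 ≤ Q - max (⟪a i.1, x⟫ - b i.1) 0 ^ 2 := by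
      intro i
      rw [hrow i x]
      set cc := max (⟪a i.1, x⟫ - b i.1) 0 with hccdef
      have e : x - cc • a i.1 - y = (x - y) - cc • a i.1 := by abel
      have e3 : ‖(x - y) - cc • a i.1‖ ^ 2
          = ‖x - y‖ ^ 2 - 2 * ⟪x - y, cc • a i.1⟫ + ‖cc • a i.1‖ ^ 2 :=
        norm_sub_sq_real (x - y) (cc • a i.1)
      have e4 : ⟪x - y, cc • a i.1⟫ = cc * ⟪x - y, a i.1⟫ := real_inner_smul_right _ _ _
      have e5 : ‖cc • a i.1‖ ^ 2 = cc ^ 2 := by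
        rw [norm_smul, ha i.1, mul_one, Real.norm_eq_abs, sq_abs]
      rw [e, e3, e4, e5]
      have hkey : cc * cc ≤ cc * ⟪x - y, a i.1⟫ := by
        rcases le_or_gt (⟪a i.1, x⟫ - b i.1) 0 with h0 | h0
        · rw [hccdef, max_eq_right h0]
          ring_nf
          exact le_refl _
        · have hcr : cc = ⟪a i.1, x⟫ - b i.1 := max_eq_left h0.le
          have hxy' : ⟪a i.1, x⟫ - b i.1 ≤ ⟪x - y, a i.1⟫ := by
            have hc0 : ⟪x - y, a i.1⟫ = ⟪a i.1, x - y⟫ := real_inner_comm _ _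
            rw [hc0, inner_sub_right]
            have := hyle i.1 i.2
            linarith
          nlinarith
      nlinarith [hkey]
    -- pull infDist down to distances to y
    have hid : ∀ c, Metric.infDist (step c x) S ^ 2 ≤ ‖step c x - y‖ ^ 2 := by
      intro c
      have h1 : Metric.infDist (step c x) S ≤ ‖step c x - y‖ := by
        have := Metric.infDist_le_dist_of_mem (x := step c x) hyS
        rwa [dist_eq_norm] at this
      nlinarith [Metric.infDist_nonneg (s := S) (x := step c x)]
    -- sum bound
    have hsum1 : (∑ c : Fin m ⊕ {i : Fin (ne + ni) // ne ≤ (i : ℕ)},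
          w c * Metric.infDist (step c x) S ^ 2)
        ≤ (∑ k : Fin m, (1 / D) * (β * Q - ∑ i ∈ T k, (⟪a i, x⟫ - b i) ^ 2))
          + ∑ i : {i : Fin (ne + ni) // ne ≤ (i : ℕ)},
              (1 / D) * (Q - max (⟪a i.1, x⟫ - b i.1) 0 ^ 2) := by
      rw [Fintype.sum_sum_type]
      refine add_le_add (Finset.sum_le_sum fun k _ => ?_) (Finset.sum_le_sum fun i _ => ?_)
      · rw [hwl' k]
        have h1 : Metric.infDist (step (Sum.inl k) x) S ^ 2
            ≤ Q - (∑ i ∈ T k, (⟪a i, x⟫ - b i) ^ 2) / β :=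
          le_trans (hid _) (hblock k)
        have h2 : β / D * Metric.infDist (step (Sum.inl k) x) S ^ 2
            ≤ β / D * (Q - (∑ i ∈ T k, (⟪a i, x⟫ - b i) ^ 2) / β) :=
          mul_le_mul_of_nonneg_left h1 (by positivity)
        refine le_trans h2 (le_of_eq ?_)
        field_simp
      · rw [hwr' i]
        exact mul_le_mul_of_nonneg_left (le_trans (hid _) (hrowb i)) (by positivity)
    -- identify the total residual
    set R := ∑ i : Fin (ne + ni), (if (i : ℕ) < ne then ⟪a i, x⟫ - b i
        else max (⟪a i, x⟫ - b i) 0) ^ 2 with hRdef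
    have hR0 : 0 ≤ R := Finset.sum_nonneg fun i _ => sq_nonneg _
    have hSeq : (∑ k : Fin m, ∑ i ∈ T k, (⟪a i, x⟫ - b i) ^ 2)
        = ∑ i ∈ Finset.univ.filter (fun i : Fin (ne + ni) => (i : ℕ) < ne),
            (⟪a i, x⟫ - b i) ^ 2 := by
      rw [← hTunion, Finset.sum_biUnion]
      intro k _ l _ hkl
      exact hTdisj k l hkl
    have hSin : (∑ i : {i : Fin (ne + ni) // ne ≤ (i : ℕ)},
          max (⟪a i.1, x⟫ - b i.1) 0 ^ 2)
        = ∑ i ∈ Finset.univ.filter (fun i : Fin (ne + ni) => ne ≤ (i : ℕ)),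
            max (⟪a i, x⟫ - b i) 0 ^ 2 := by
      exact (Finset.sum_subtype
        (Finset.univ.filter fun i : Fin (ne + ni) => ne ≤ (i : ℕ))
        (fun i => by simp) (fun i => max (⟪a i, x⟫ - b i) 0 ^ 2)).symm
    have hfc : (Finset.univ.filter fun i : Fin (ne + ni) => ¬ (i : ℕ) < ne)
        = Finset.univ.filter fun i : Fin (ne + ni) => ne ≤ (i : ℕ) :=
      Finset.filter_congr fun i _ => by rw [not_lt]
    have hRsplit : R = (∑ i ∈ Finset.univ.filter (fun i : Fin (ne + ni) => (i : ℕ) < ne),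
          (⟪a i, x⟫ - b i) ^ 2)
        + ∑ i ∈ Finset.univ.filter (fun i : Fin (ne + ni) => ne ≤ (i : ℕ)),
            max (⟪a i, x⟫ - b i) 0 ^ 2 := by
      rw [hRdef, ← Finset.sum_filter_add_sum_filter_not Finset.univ
        (fun i : Fin (ne + ni) => (i : ℕ) < ne), hfc]
      congr 1
      · refine Finset.sum_congr rfl fun i hi => ?_
        rw [Finset.mem_filter] at hi
        rw [if_pos hi.2]
      · refine Finset.sum_congr rfl fun i hi => ?_
        rw [Finset.mem_filter] at hi
        rw [if_neg (by omega)]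
    -- compute the upper bound sum
    have hcard : (Fintype.card {i : Fin (ne + ni) // ne ≤ (i : ℕ)}) = ni := by
      rw [Fintype.card_subtype]
      exact card_filter_ge ne ni
    have hsum2 : (∑ k : Fin m, (1 / D) * (β * Q - ∑ i ∈ T k, (⟪a i, x⟫ - b i) ^ 2))
          + (∑ i : {i : Fin (ne + ni) // ne ≤ (i : ℕ)},
              (1 / D) * (Q - max (⟪a i.1, x⟫ - b i.1) 0 ^ 2))
        = Q - (1 / D) * R := by
      rw [← Finset.mul_sum, ← Finset.mul_sum]
      rw [Finset.sum_sub_distrib, Finset.sum_sub_distrib]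
      rw [Finset.sum_const, Finset.sum_const, Finset.card_univ, Finset.card_univ,
        Fintype.card_fin, hcard, hSeq, hSin, hRsplit]
      rw [nsmul_eq_mul, nsmul_eq_mul]
      rw [hD]
      field_simp
      ring
    -- Hoffman bound
    have hQR : Q ≤ L ^ 2 * R := by
      have hH := hHoff x
      rw [← hRdef, hdist] at hH
      nlinarith [Real.sq_sqrt hR0, Real.sqrt_nonneg R, norm_nonneg (x - y)]
    have hfin : Q - (1 / D) * R ≤ (1 - 1 / (L ^ 2 * D')) * Q := by
      have hL2 : 0 < L ^ 2 := by positivity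
      have h1 : Q / (L ^ 2) ≤ R := by rw [div_le_iff₀ hL2]; nlinarith
      have h2 : Q / (L ^ 2 * D) ≤ (1 / D) * R := by
        calc Q / (L ^ 2 * D) = (Q / L ^ 2) / D := by rw [div_div]
          _ ≤ R / D := (div_le_div_iff_of_pos_right hDpos).mpr h1
          _ = (1 / D) * R := by rw [one_div, mul_comm, div_eq_mul_inv]
      have h3 : Q / (L ^ 2 * D') ≤ Q / (L ^ 2 * D) := by
        apply div_le_div_of_nonneg_left hQ0 (by positivity)
        have := mul_le_mul_of_nonneg_left hDD' (le_of_lt hL2)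
        linarith
      have h4 : (1 - 1 / (L ^ 2 * D')) * Q = Q - Q / (L ^ 2 * D') := by ring
      linarith
    rw [hdist]
    calc (∑ c : Fin m ⊕ {i : Fin (ne + ni) // ne ≤ (i : ℕ)},
          w c * Metric.infDist (step c x) S ^ 2)
        ≤ _ := hsum1
      _ = Q - (1 / D) * R := hsum2
      _ ≤ (1 - 1 / (L ^ 2 * D')) * Q := hfin
  -- induction over iterations
  have main : ∀ J : ℕ,
      (∑ ω : Fin J → (Fin m ⊕ {i : Fin (ne + ni) // ne ≤ (i : ℕ)}),
        (∏ k, w (ω k)) * Metric.infDist (kacIter step x0 J ω) S ^ 2)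
      ≤ (1 - 1 / (L ^ 2 * D')) ^ J * Metric.infDist x0 S ^ 2 := by
    intro J
    induction J with
    | zero =>
      rw [pow_zero, one_mul]
      simp [kacIter]
    | succ J ih =>
      have hw0prod : ∀ σ : Fin J → (Fin m ⊕ {i : Fin (ne + ni) // ne ≤ (i : ℕ)}),
          0 ≤ ∏ k, w (σ k) := fun σ => Finset.prod_nonneg fun k _ => hw0 _
      set γ := 1 - 1 / (L ^ 2 * D') with hγ
      let e : ((Fin J → (Fin m ⊕ {i : Fin (ne + ni) // ne ≤ (i : ℕ)}))
            × (Fin m ⊕ {i : Fin (ne + ni) // ne ≤ (i : ℕ)}))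
          ≃ (Fin (J + 1) → (Fin m ⊕ {i : Fin (ne + ni) // ne ≤ (i : ℕ)})) :=
        { toFun := fun p => Fin.snoc p.1 p.2
          invFun := fun ω => (fun k => ω k.castSucc, ω (Fin.last J))
          left_inv := fun p => by
            refine Prod.ext ?_ ?_
            · funext k
              simp [Fin.snoc_castSucc]
            · simp [Fin.snoc_last]
          right_inv := fun ω => Fin.snoc_init_self ω }
      rw [← Equiv.sum_comp e (fun ω => (∏ k, w (ω k)) *
        Metric.infDist (kacIter step x0 (J + 1) ω) S ^ 2)]
      rw [Fintype.sum_prod_type]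
      have hterm : ∀ σ : Fin J → (Fin m ⊕ {i : Fin (ne + ni) // ne ≤ (i : ℕ)}),
          (∑ c : Fin m ⊕ {i : Fin (ne + ni) // ne ≤ (i : ℕ)},
            (∏ k, w ((e (σ, c)) k)) *
              Metric.infDist (kacIter step x0 (J + 1) (e (σ, c))) S ^ 2)
          = (∏ k, w (σ k)) * ∑ c : Fin m ⊕ {i : Fin (ne + ni) // ne ≤ (i : ℕ)},
              w c * Metric.infDist (step c (kacIter step x0 J σ)) S ^ 2 := by
        intro σ
        rw [Finset.mul_sum]
        refine Finset.sum_congr rfl fun c _ => ?_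
        have he : e (σ, c) = Fin.snoc σ c := rfl
        have h1 : kacIter step x0 (J + 1) (e (σ, c)) = step c (kacIter step x0 J σ) := by
          rw [he]
          simp only [kacIter]
          rw [Fin.snoc_last]
          simp only [Fin.snoc_castSucc]
        have h2 : (∏ k : Fin (J + 1), w ((e (σ, c)) k))
            = (∏ k : Fin J, w (σ k)) * w c := by
          rw [he, Fin.prod_univ_castSucc]
          simp [Fin.snoc_castSucc, Fin.snoc_last]
        rw [h1, h2]
        ring
      rw [Finset.sum_congr rfl fun σ _ => hterm σ]
      calc (∑ σ : Fin J → (Fin m ⊕ {i : Fin (ne + ni) // ne ≤ (i : ℕ)}),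
            (∏ k, w (σ k)) * ∑ c : Fin m ⊕ {i : Fin (ne + ni) // ne ≤ (i : ℕ)},
              w c * Metric.infDist (step c (kacIter step x0 J σ)) S ^ 2)
          ≤ ∑ σ : Fin J → (Fin m ⊕ {i : Fin (ne + ni) // ne ≤ (i : ℕ)}),
            (∏ k, w (σ k)) * (γ * Metric.infDist (kacIter step x0 J σ) S ^ 2) :=
            Finset.sum_le_sum fun σ _ =>
              mul_le_mul_of_nonneg_left (key _) (hw0prod σ)
        _ = γ * ∑ σ : Fin J → (Fin m ⊕ {i : Fin (ne + ni) // ne ≤ (i : ℕ)}),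
            (∏ k, w (σ k)) * Metric.infDist (kacIter step x0 J σ) S ^ 2 := by
            rw [Finset.mul_sum]
            exact Finset.sum_congr rfl fun σ _ => by ring
        _ ≤ γ * ((γ ^ J) * Metric.infDist x0 S ^ 2) :=
            mul_le_mul_of_nonneg_left ih hγ0
        _ = γ ^ (J + 1) * Metric.infDist x0 S ^ 2 := by ring
  exact main j
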